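/- Let $G$ be a finite directed weighted graph without loops with adjacency matrix $A$, and let $B$ be the Hashimoto (nonbacktracking line-graph) matrix: $B_{ef}=W_{ef}$ if $W_{ef}W_{fe}=0$ and $B_{ef}=0$ otherwise, where $W$ is the weighted line-graph matrix. Let $p_k(A)$ denote the matrix whose $(i,j)$ entry is the weighted sum over all nonbacktracking walks of length $k$ from $i$ to $j$ (with $p_0(A)=I$). Then for all $k\geq 0$, $L^T\,\sqrt{Z}\,(B^{\circ 1/2})^k\,\sqrt{Z}\,R = p_{k+1}(A)$. -/

import Mathlib

open Matrix

/-- The `m × n` incidence matrix associated with an endpoint map `f` on edge labels. -/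
def incMat {n m : ℕ} (f : Fin m → Fin n) : Matrix (Fin m) (Fin n) ℝ :=
  Matrix.of fun e j => if f e = j then (1 : ℝ) else 0

/-- Entrywise (nonnegative) square root of a real matrix. -/
noncomputable def esqrt {α : Type*} (M : Matrix α α ℝ) : Matrix α α ℝ :=
  Matrix.of fun i j => Real.sqrt (M i j)

open scoped Classical in
/-- `pMat A k` is the matrix whose `(i,j)` entry is the weighted sum over all
nonbacktracking walks of length `k` from node `i` to node `j` (the weight of a walk
being the product of the entries of `A` along its steps; node sequences that do not
follow edges of the graph contribute zero), with `pMat A 0 = I`. -/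
noncomputable def pMat {n : ℕ} (A : Matrix (Fin n) (Fin n) ℝ) : ℕ → Matrix (Fin n) (Fin n) ℝ
  | 0 => 1
  | Nat.succ k => Matrix.of fun i j =>
      ∑ v ∈ Finset.univ.filter (fun v : Fin (k + 2) → Fin n =>
          v 0 = i ∧ v (Fin.last (k + 1)) = j ∧
          ∀ t : Fin k, v t.castSucc.castSucc ≠ v t.succ.succ),
        ∏ t : Fin (k + 1), A (v t.castSucc) (v t.succ)

lemma telesc : ∀ (k : ℕ) (a : Fin (k+1) → ℝ),
    a 0 * (∏ t : Fin k, a t.castSucc * a t.succ) * a (Fin.last k)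
      = ∏ t : Fin (k+1), a t * a t := by
  intro k
  induction k with
  | zero => intro a; simp [Fin.last]
  | succ k ih =>
    intro a
    rw [Fin.prod_univ_castSucc (f := fun t : Fin (k+1) => a t.castSucc * a t.succ)]
    have h1 : ∀ t : Fin k, a t.castSucc.castSucc * a t.castSucc.succ
        = (a ∘ Fin.castSucc) t.castSucc * (a ∘ Fin.castSucc) t.succ := by
      intro t; show a t.castSucc.castSucc * a t.castSucc.succ = a t.castSucc.castSucc * a t.succ.castSucc; rw [Fin.succ_castSucc]
    rw [Finset.prod_congr rfl (fun t _ => h1 t)]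
    have h2 := ih (a ∘ Fin.castSucc)
    simp only [Function.comp] at h2 ⊢
    have h0 : a (Fin.castSucc 0) = a 0 := by norm_num
    rw [h0] at h2
    rw [Fin.prod_univ_castSucc (f := fun t : Fin (k+2) => a t * a t)]
    have hlast : (Fin.last k).succ = Fin.last (k+1) := by simp [Fin.succ_last]
    calc a 0 * ((∏ t : Fin k, a t.castSucc.castSucc * a t.succ.castSucc) *
          (a (Fin.last k).castSucc * a (Fin.last k).succ)) * a (Fin.last (k+1))
        = ((a 0 * (∏ t : Fin k, a t.castSucc.castSucc * a t.succ.castSucc)) *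
            a (Fin.last k).castSucc) * (a (Fin.last k).succ * a (Fin.last (k+1))) := by ring
      _ = (∏ t : Fin (k+1), a t.castSucc * a t.castSucc) * (a (Fin.last (k+1)) * a (Fin.last (k+1))) := by
            rw [h2, hlast]

lemma key {m : ℕ} (M : Matrix (Fin m) (Fin m) ℝ) : ∀ (k : ℕ) (e : Fin m) (g : Fin m → ℝ),
    ∑ f, (M ^ k) e f * g f
      = ∑ c : Fin (k+1) → Fin m,
          (if c 0 = e then (∏ t : Fin k, M (c t.castSucc) (c t.succ)) * g (c (Fin.last k)) else 0) := by
  intro k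
  induction k with
  | zero =>
    intro e g
    have h := Fintype.sum_equiv (Equiv.funUnique (Fin 1) (Fin m))
      (fun c : Fin 1 → Fin m => if c 0 = e then (∏ t : Fin 0, M (c t.castSucc) (c t.succ)) * g (c (Fin.last 0)) else 0)
      (fun x : Fin m => if x = e then g x else 0)
      (by intro c; simp [Equiv.funUnique, Fin.last])
    rw [h]
    simp [Matrix.one_apply]
  | succ k ih =>
    intro e g
    have hsplit : ∀ f, (M ^ (k+1)) e f = ∑ x, M e x * (M ^ k) x f := by
      intro f; rw [pow_succ']; rfl
    simp only [hsplit, Finset.sum_mul]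
    rw [Finset.sum_comm]
    have hih : ∀ x, (∑ f, M e x * (M ^ k) x f * g f)
        = M e x * ∑ c : Fin (k+1) → Fin m,
            (if c 0 = x then (∏ t : Fin k, M (c t.castSucc) (c t.succ)) * g (c (Fin.last k)) else 0) := by
      intro x
      rw [← ih x g, Finset.mul_sum]
      exact Finset.sum_congr rfl fun f _ => by ring
    simp only [hih, Finset.mul_sum]
    have h := Fintype.sum_equiv (Fin.consEquiv (fun _ : Fin (k+2) => Fin m))
      (fun p : Fin m × (Fin (k+1) → Fin m) =>
        if p.1 = e then M p.1 (p.2 0) * ((∏ t : Fin k, M (p.2 t.castSucc) (p.2 t.succ)) * g (p.2 (Fin.last k))) else 0)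
      (fun c : Fin (k+2) → Fin m => if c 0 = e then (∏ t : Fin (k+1), M (c t.castSucc) (c t.succ)) * g (c (Fin.last (k+1))) else 0)
      ?_
    · rw [← h, Fintype.sum_prod_type]
      trans (∑ d : Fin (k+1) → Fin m,
        M e (d 0) * ((∏ t : Fin k, M (d t.castSucc) (d t.succ)) * g (d (Fin.last k))))
      · rw [Finset.sum_comm]
        apply Finset.sum_congr rfl
        intro d _
        simp [mul_ite, Finset.sum_ite_eq]
      · rw [Finset.sum_comm]
        apply Finset.sum_congr rfl
        intro d _
        simp [Finset.sum_ite_eq']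
    · rintro ⟨x, d⟩
      have h0 : (Fin.cons x d : Fin (k+2) → Fin m) 0 = x := rfl
      have hprod : ∏ t : Fin (k+1), M ((Fin.cons x d : Fin (k+2) → Fin m) t.castSucc) ((Fin.cons x d : Fin (k+2) → Fin m) t.succ)
          = M x (d 0) * ∏ t : Fin k, M (d t.castSucc) (d t.succ) := by
        rw [Fin.prod_univ_succ]
        congr 1
      have hlast : (Fin.cons x d : Fin (k+2) → Fin m) (Fin.last (k+1)) = d (Fin.last k) := by
        rw [← Fin.succ_last, Fin.cons_succ]
      simp only [Fin.consEquiv, Equiv.coe_fn_mk]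
      simp only [h0, hprod, hlast, mul_assoc]

/-- With `B` the Hashimoto (nonbacktracking line-graph) matrix, for all
`k ≥ 0` one has `Lᵀ √Z (B^{∘1/2})^k √Z R = p_{k+1}(A)`. -/
theorem stmt6 {n m : ℕ} (src tgt : Fin m → Fin n) (w : Fin m → ℝ)
    (hw : ∀ e, 0 < w e)
    (hinj : Function.Injective fun e => (src e, tgt e))
    (hloop : ∀ e, src e ≠ tgt e)
    (A : Matrix (Fin n) (Fin n) ℝ)
    (hA : ∀ e, A (src e) (tgt e) = w e)
    (hA0 : ∀ i j, (∀ e, ¬(src e = i ∧ tgt e = j)) → A i j = 0)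
    (W : Matrix (Fin m) (Fin m) ℝ)
    (hW : ∀ e f, W e f = if tgt e = src f then w e * w f else 0)
    (B : Matrix (Fin m) (Fin m) ℝ)
    (hB : ∀ e f, B e f = if W e f * W f e = 0 then W e f else 0) :
    ∀ k : ℕ,
      (incMat src)ᵀ * Matrix.diagonal (fun e => Real.sqrt (w e)) * (esqrt B) ^ k *
        Matrix.diagonal (fun e => Real.sqrt (w e)) * incMat tgt = pMat A (k + 1) := by
  intro k
  classical
  set M := esqrt B with hM
  have hMe : ∀ e f, M e f =
      if tgt e = src f ∧ ¬ tgt f = src e then Real.sqrt (w e) * Real.sqrt (w f) else 0 := by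
    intro e f
    show Real.sqrt (B e f) = _
    rw [hB, hW e f, hW f e]
    by_cases h1 : tgt e = src f
    · by_cases h2 : tgt f = src e
      · have : w e * w f * (w f * w e) ≠ 0 :=
          (mul_pos (mul_pos (hw e) (hw f)) (mul_pos (hw f) (hw e))).ne'
        simp [h1, h2, this]
      · simp [h1, h2, Real.sqrt_mul (hw e).le]
    · simp [h1]
  ext i j
  -- Step 1 : entry of LHS as a sum over edge sequences
  have hL : ((incMat src)ᵀ * Matrix.diagonal (fun e => Real.sqrt (w e)) * M ^ k *
      Matrix.diagonal (fun e => Real.sqrt (w e)) * incMat tgt) i j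
      = ∑ c : Fin (k+1) → Fin m,
          (if src (c 0) = i then (1:ℝ) else 0) *
            (Real.sqrt (w (c 0)) *
              ((∏ t : Fin k, M (c t.castSucc) (c t.succ)) *
                (Real.sqrt (w (c (Fin.last k))) * (if tgt (c (Fin.last k)) = j then (1:ℝ) else 0)))) := by
    have h1 : ∀ e, (Matrix.diagonal (fun e => Real.sqrt (w e)) *
        (M ^ k * (Matrix.diagonal (fun e => Real.sqrt (w e)) * incMat tgt))) e j
        = Real.sqrt (w e) * ∑ f, (M ^ k) e f *
            (Real.sqrt (w f) * (if tgt f = j then (1:ℝ) else 0)) := by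
      intro e
      rw [Matrix.diagonal_mul, Matrix.mul_apply]
      congr 1
      refine Finset.sum_congr rfl fun f _ => ?_
      rw [Matrix.diagonal_mul]
      rfl
    calc ((incMat src)ᵀ * Matrix.diagonal (fun e => Real.sqrt (w e)) * M ^ k *
        Matrix.diagonal (fun e => Real.sqrt (w e)) * incMat tgt) i j
        = ((incMat src)ᵀ * (Matrix.diagonal (fun e => Real.sqrt (w e)) *
            (M ^ k * (Matrix.diagonal (fun e => Real.sqrt (w e)) * incMat tgt)))) i j := by
          rw [Matrix.mul_assoc, Matrix.mul_assoc, Matrix.mul_assoc]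
      _ = ∑ e, (if src e = i then (1:ℝ) else 0) *
            (Real.sqrt (w e) * ∑ f, (M ^ k) e f *
              (Real.sqrt (w f) * (if tgt f = j then (1:ℝ) else 0))) := by
          rw [Matrix.mul_apply]
          exact Finset.sum_congr rfl fun e _ => by rw [h1]; rfl
      _ = ∑ e, (if src e = i then (1:ℝ) else 0) *
            (Real.sqrt (w e) * ∑ c : Fin (k+1) → Fin m,
              (if c 0 = e then (∏ t : Fin k, M (c t.castSucc) (c t.succ)) *
                (Real.sqrt (w (c (Fin.last k))) * (if tgt (c (Fin.last k)) = j then (1:ℝ) else 0)) else 0)) := by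
          simp only [key]
      _ = _ := by
          simp only [Finset.mul_sum]
          rw [Finset.sum_comm]
          refine Finset.sum_congr rfl fun c _ => ?_
          simp only [mul_ite, mul_zero]
          rw [Finset.sum_ite_eq]
          simp
  rw [hL]
  -- Step 2: reduce to a sum over good edge sequences
  have hstep2 : (∑ c : Fin (k+1) → Fin m,
          (if src (c 0) = i then (1:ℝ) else 0) *
            (Real.sqrt (w (c 0)) *
              ((∏ t : Fin k, M (c t.castSucc) (c t.succ)) *
                (Real.sqrt (w (c (Fin.last k))) * (if tgt (c (Fin.last k)) = j then (1:ℝ) else 0)))))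
      = ∑ c ∈ Finset.univ.filter (fun c : Fin (k+1) → Fin m =>
            src (c 0) = i ∧ tgt (c (Fin.last k)) = j ∧
            ∀ t : Fin k, tgt (c t.castSucc) = src (c t.succ) ∧
              ¬ tgt (c t.succ) = src (c t.castSucc)),
          ∏ t : Fin (k+1), w (c t) := by
    have hz : ∀ c ∈ (Finset.univ : Finset (Fin (k+1) → Fin m)),
        c ∉ Finset.univ.filter (fun c : Fin (k+1) → Fin m =>
            src (c 0) = i ∧ tgt (c (Fin.last k)) = j ∧
            ∀ t : Fin k, tgt (c t.castSucc) = src (c t.succ) ∧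
              ¬ tgt (c t.succ) = src (c t.castSucc)) →
        (if src (c 0) = i then (1:ℝ) else 0) *
            (Real.sqrt (w (c 0)) *
              ((∏ t : Fin k, M (c t.castSucc) (c t.succ)) *
                (Real.sqrt (w (c (Fin.last k))) * (if tgt (c (Fin.last k)) = j then (1:ℝ) else 0)))) = 0 := by
      intro c _ hc
      simp only [Finset.mem_filter, Finset.mem_univ, true_and, not_and_or] at hc
      rcases hc with h | h | h
      · rw [if_neg h]; ring
      · rw [if_neg h]; ring
      · push_neg at h
        obtain ⟨t, ht⟩ := h
        have : M (c t.castSucc) (c t.succ) = 0 := by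
          rw [hMe]
          exact if_neg (fun hcon => hcon.2 (ht hcon.1))
        rw [Finset.prod_eq_zero (Finset.mem_univ t) this]
        ring
    rw [← Finset.sum_subset (Finset.filter_subset _ _) hz]
    refine Finset.sum_congr rfl fun c hc => ?_
    obtain ⟨h0, hla, hgood⟩ := (Finset.mem_filter.mp hc).2
    rw [if_pos h0, if_pos hla]
    have hMc : ∀ t : Fin k, M (c t.castSucc) (c t.succ)
        = Real.sqrt (w (c t.castSucc)) * Real.sqrt (w (c t.succ)) := fun t => by
      rw [hMe]; exact if_pos (hgood t)
    rw [Finset.prod_congr rfl (fun t _ => hMc t)]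
    have ht := telesc k (fun t => Real.sqrt (w (c t)))
    have h2 : (∏ t : Fin (k+1), Real.sqrt (w (c t)) * Real.sqrt (w (c t)))
        = ∏ t : Fin (k+1), w (c t) :=
      Finset.prod_congr rfl fun t _ => Real.mul_self_sqrt (hw _).le
    rw [← h2, ← ht]
    ring
  rw [hstep2]
  -- Step 3: the right-hand side
  have hpm : pMat A (k+1) i j
      = ∑ v ∈ Finset.univ.filter (fun v : Fin (k + 2) → Fin n =>
            v 0 = i ∧ v (Fin.last (k + 1)) = j ∧
            ∀ t : Fin k, v t.castSucc.castSucc ≠ v t.succ.succ),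
          ∏ t : Fin (k + 1), A (v t.castSucc) (v t.succ) := by
    show (Matrix.of _ : Matrix (Fin n) (Fin n) ℝ) i j = _
    rw [Matrix.of_apply]
  rw [hpm]
  -- restrict the RHS sum to edge-following vertex sequences
  have hrestrict : (∑ v ∈ Finset.univ.filter (fun v : Fin (k + 2) → Fin n =>
            v 0 = i ∧ v (Fin.last (k + 1)) = j ∧
            ∀ t : Fin k, v t.castSucc.castSucc ≠ v t.succ.succ),
          ∏ t : Fin (k + 1), A (v t.castSucc) (v t.succ))
      = ∑ v ∈ (Finset.univ.filter (fun v : Fin (k + 2) → Fin n =>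
            v 0 = i ∧ v (Fin.last (k + 1)) = j ∧
            ∀ t : Fin k, v t.castSucc.castSucc ≠ v t.succ.succ)).filter
            (fun v => ∀ t : Fin (k+1), ∃ e, src e = v t.castSucc ∧ tgt e = v t.succ),
          ∏ t : Fin (k + 1), A (v t.castSucc) (v t.succ) := by
    refine (Finset.sum_subset (Finset.filter_subset _ _) ?_).symm
    intro v hv hv2
    have hex : ¬ ∀ t : Fin (k+1), ∃ e, src e = v t.castSucc ∧ tgt e = v t.succ := by
      intro hall
      exact hv2 (Finset.mem_filter.mpr ⟨hv, hall⟩)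
    push_neg at hex
    obtain ⟨t, ht⟩ := hex
    have : A (v t.castSucc) (v t.succ) = 0 := hA0 _ _ (fun e he => ht e he.1 he.2)
    exact Finset.prod_eq_zero (Finset.mem_univ t) this
  rw [hrestrict]
  -- Step 4: bijection between good edge sequences and edge-following vertex sequences
  set vMap : (Fin (k+1) → Fin m) → (Fin (k+2) → Fin n) :=
    fun c => Fin.snoc (fun t => src (c t)) (tgt (c (Fin.last k))) with hvMap
  have hvcast : ∀ c (t : Fin (k+1)), vMap c t.castSucc = src (c t) := by
    intro c t; simp [hvMap]
  have hvlast : ∀ c, vMap c (Fin.last (k+1)) = tgt (c (Fin.last k)) := by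
    intro c; simp [hvMap]
  have hzero : ((0 : Fin (k+1)).castSucc : Fin (k+2)) = 0 := by
    apply Fin.ext; simp
  have hvsucc : ∀ c, (∀ t : Fin k, tgt (c t.castSucc) = src (c t.succ)) →
      ∀ t : Fin (k+1), vMap c t.succ = tgt (c t) := by
    intro c hp t
    refine Fin.lastCases ?_ ?_ t
    · rw [Fin.succ_last]; exact hvlast c
    · intro s
      rw [Fin.succ_castSucc, hvcast]
      exact (hp s).symm
  have himg : ∀ c ∈ Finset.univ.filter (fun c : Fin (k+1) → Fin m =>
        src (c 0) = i ∧ tgt (c (Fin.last k)) = j ∧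
        ∀ t : Fin k, tgt (c t.castSucc) = src (c t.succ) ∧
          ¬ tgt (c t.succ) = src (c t.castSucc)),
      vMap c ∈ (Finset.univ.filter (fun v : Fin (k + 2) → Fin n =>
            v 0 = i ∧ v (Fin.last (k + 1)) = j ∧
            ∀ t : Fin k, v t.castSucc.castSucc ≠ v t.succ.succ)).filter
            (fun v => ∀ t : Fin (k+1), ∃ e, src e = v t.castSucc ∧ tgt e = v t.succ) := by
    intro c hc
    obtain ⟨h0, hla, hgood⟩ := (Finset.mem_filter.mp hc).2
    have hpath : ∀ t : Fin k, tgt (c t.castSucc) = src (c t.succ) := fun t => (hgood t).1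
    refine Finset.mem_filter.mpr ⟨Finset.mem_filter.mpr ⟨Finset.mem_univ _, ?_, ?_, ?_⟩, ?_⟩
    · show vMap c 0 = i
      rw [← hzero, hvcast]; exact h0
    · show vMap c (Fin.last (k+1)) = j
      rw [hvlast]; exact hla
    · intro t
      show vMap c t.castSucc.castSucc ≠ vMap c t.succ.succ
      rw [hvcast c t.castSucc, hvsucc c hpath t.succ]
      exact fun hcontra => (hgood t).2 hcontra.symm
    · intro t
      show ∃ e, src e = vMap c t.castSucc ∧ tgt e = vMap c t.succ
      exact ⟨c t, (hvcast c t).symm, (hvsucc c hpath t).symm⟩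
  refine Finset.sum_bij' (fun c _ => vMap c)
    (fun v hv => fun t => ((Finset.mem_filter.mp hv).2 t).choose) himg ?_ ?_ ?_ ?_
  · -- inverse maps into the source set
    intro v hv
    obtain ⟨hv1, hex⟩ := Finset.mem_filter.mp hv
    obtain ⟨_, h0, hla, hnb⟩ := Finset.mem_filter.mp hv1
    have hsp : ∀ t : Fin (k+1), src ((hex t).choose) = v t.castSucc ∧
        tgt ((hex t).choose) = v t.succ := fun t => (hex t).choose_spec
    refine Finset.mem_filter.mpr ⟨Finset.mem_univ _, ?_, ?_, ?_⟩
    · rw [(hsp 0).1, hzero]; exact h0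
    · rw [(hsp (Fin.last k)).2, Fin.succ_last]; exact hla
    · intro t
      refine ⟨?_, ?_⟩
      · rw [(hsp t.castSucc).2, (hsp t.succ).1, Fin.succ_castSucc]
      · rw [(hsp t.succ).2, (hsp t.castSucc).1]
        exact fun hcontra => hnb t hcontra.symm
  · -- left inverse
    intro c hc
    obtain ⟨h0, hla, hgood⟩ := (Finset.mem_filter.mp hc).2
    have hpath : ∀ t : Fin k, tgt (c t.castSucc) = src (c t.succ) := fun t => (hgood t).1
    funext t
    have h := (Finset.mem_filter.mp (himg c hc)).2
    show (h t).choose = c t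
    apply hinj
    show (src (h t).choose, tgt (h t).choose) = (src (c t), tgt (c t))
    rw [(h t).choose_spec.1, (h t).choose_spec.2, hvcast, hvsucc c hpath]
  · -- right inverse
    intro v hv
    have hex := (Finset.mem_filter.mp hv).2
    have hsp : ∀ t : Fin (k+1), src ((hex t).choose) = v t.castSucc ∧
        tgt ((hex t).choose) = v t.succ := fun t => (hex t).choose_spec
    funext s
    show vMap (fun t => (hex t).choose) s = v s
    refine Fin.lastCases ?_ ?_ s
    · rw [hvlast, (hsp (Fin.last k)).2, Fin.succ_last]
    · intro u
      rw [hvcast, (hsp u).1]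
  · -- weights agree
    intro c hc
    obtain ⟨h0, hla, hgood⟩ := (Finset.mem_filter.mp hc).2
    have hpath : ∀ t : Fin k, tgt (c t.castSucc) = src (c t.succ) := fun t => (hgood t).1
    refine Finset.prod_congr rfl fun t _ => ?_
    show w (c t) = A (vMap c t.castSucc) (vMap c t.succ)
    rw [hvcast c t, hvsucc c hpath t, hA]
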